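/- If in addition each f_i is μ_{f_i}-strongly convex and G is convex, then for every x∈ℝ^{n_1}×⋯×ℝ^{n_N}, letting z=T(x) and x* be the unique minimizer of Φ, one has ½‖z−x*‖²_{μ_F} ≤ φ_Γ(x) − min Φ, where μ_F=(1/N)·blockdiag(μ_{f_1}I_{n_1},…,μ_{f_N}I_{n_N}). -/

import Mathlib

open Filter Topology Metric Bornology Set
open scoped RealInnerProductSpace

noncomputable section

variable {N : ℕ} {E : Fin N → Type*}
  [∀ i, NormedAddCommGroup (E i)] [∀ i, InnerProductSpace ℝ (E i)]
  [∀ i, CompleteSpace (E i)]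

/-- `F(x) = (1/N) ∑ᵢ fᵢ(xᵢ)`, the smooth separable part of the cost. -/
def Fsum (f : ∀ i, E i → ℝ) (x : PiLp 2 E) : ℝ := (N : ℝ)⁻¹ * ∑ i, f i (x i)

/-- `Φ = F + G`, the total cost, extended-real-valued. -/
def Phi (f : ∀ i, E i → ℝ) (G : PiLp 2 E → EReal) (x : PiLp 2 E) : EReal :=
  ((Fsum f x : ℝ) : EReal) + G x

/-- The model `M(w,x) = F(x) + ⟨∇F(x),w-x⟩ + G(w) + ½‖w-x‖²_{Γ⁻¹}`, where `∇F(x)ᵢ = f'ᵢ(xᵢ)/N`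
and `Γ = blockdiag(γ₁ I, …, γ_N I)`. -/
def Mdl (f : ∀ i, E i → ℝ) (f' : ∀ i, E i → E i) (γ : Fin N → ℝ)
    (G : PiLp 2 E → EReal) (w x : PiLp 2 E) : EReal :=
  ((Fsum f x + (N : ℝ)⁻¹ * ∑ i, ⟪f' i (x i), w i - x i⟫
      + 2⁻¹ * ∑ i, (γ i)⁻¹ * ‖w i - x i‖ ^ 2 : ℝ) : EReal) + G w

/-- The forward-backward operator `T(x) = argmin_w M(w,x)`. -/
def Tmap (f : ∀ i, E i → ℝ) (f' : ∀ i, E i → E i) (γ : Fin N → ℝ)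
    (G : PiLp 2 E → EReal) (x : PiLp 2 E) : Set (PiLp 2 E) :=
  {z | ∀ w, Mdl f f' γ G z x ≤ Mdl f f' γ G w x}

/-- The `Γ⁻¹`-proximal mapping
`prox_G^{Γ⁻¹}(u) = argmin_w { G(w) + ½‖w-u‖²_{Γ⁻¹} }`. -/
def proxSet (γ : Fin N → ℝ) (G : PiLp 2 E → EReal) (u : PiLp 2 E) : Set (PiLp 2 E) :=
  {z | ∀ w, G z + ((2⁻¹ * ∑ i, (γ i)⁻¹ * ‖z i - u i‖ ^ 2 : ℝ) : EReal)
        ≤ G w + ((2⁻¹ * ∑ i, (γ i)⁻¹ * ‖w i - u i‖ ^ 2 : ℝ) : EReal)}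

/-- The forward (gradient) step `x - Γ∇F(x)`. -/
def fwd (f' : ∀ i, E i → E i) (γ : Fin N → ℝ) (x : PiLp 2 E) : PiLp 2 E :=
  WithLp.toLp 2 (fun i => x i - (γ i * (N : ℝ)⁻¹) • f' i (x i))

/-- Convexity for an extended-real-valued function. -/
def ERealConvex {X : Type*} [AddCommMonoid X] [Module ℝ X] (G : X → EReal) : Prop :=
  ∀ x y : X, ∀ a b : ℝ, 0 ≤ a → 0 ≤ b → a + b = 1 →
    G (a • x + b • y) ≤ (a : ℝ) * G x + (b : ℝ) * G y

/-- The regular (Fréchet) subdifferential `∂̂h(x)` of an extended-real-valued function. -/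
def frechetSubdiff {X : Type*} [NormedAddCommGroup X] [InnerProductSpace ℝ X]
    (h : X → EReal) (x : X) : Set X :=
  {v | h x ≠ ⊤ ∧ h x ≠ ⊥ ∧ ∀ ε : ℝ, 0 < ε →
      ∀ᶠ w in 𝓝 x, h x + ((⟪v, w - x⟫ - ε * ‖w - x‖ : ℝ) : EReal) ≤ h w}

/-- The limiting subdifferential `∂h(x)`. -/
def limitingSubdiff {X : Type*} [NormedAddCommGroup X] [InnerProductSpace ℝ X]
    (h : X → EReal) (x : X) : Set X :=
  {v | ∃ u w : ℕ → X, (∀ k, w k ∈ frechetSubdiff h (u k)) ∧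
      Tendsto u atTop (𝓝 x) ∧ Tendsto (fun k => h (u k)) atTop (𝓝 (h x)) ∧
      Tendsto w atTop (𝓝 v)}

/-- The Kurdyka-Łojasiewicz property with exponent `θ` (at every point of `dom ∂h`),
with desingularizing function `ψ(s) = ϱ s^{1-θ}`. -/
def HasKLExponent {X : Type*} [NormedAddCommGroup X] [InnerProductSpace ℝ X]
    (h : X → EReal) (θ : ℝ) : Prop :=
  ∀ xb : X, (limitingSubdiff h xb).Nonempty →
    ∃ ε η ϱ : ℝ, 0 < ε ∧ 0 < η ∧ 0 < ϱ ∧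
      ∀ w : X, ‖w - xb‖ < ε → h xb < h w → h w < h xb + ((η : ℝ) : EReal) →
        ∀ v ∈ limitingSubdiff h w,
          1 ≤ ϱ * (1 - θ) * (h w - h xb).toReal ^ (-θ) * ‖v‖


private lemma descent_lemma' {X : Type*} [NormedAddCommGroup X] [InnerProductSpace ℝ X]
    [CompleteSpace X]
    (f : X → ℝ) (f' : X → X) (L : ℝ)
    (hf : ∀ u, HasGradientAt f (f' u) u)
    (hlip : ∀ u v : X, ‖f' u - f' v‖ ≤ L * ‖u - v‖) (u v : X) :
    f v ≤ f u + ⟪f' u, v - u⟫ + L / 2 * ‖v - u‖ ^ 2 := by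
  set d := v - u with hd
  have hg : ∀ t : ℝ, HasDerivAt (fun t : ℝ => f (u + t • d)) ⟪f' (u + t • d), d⟫ t := by
    intro t
    have hline : HasDerivAt (fun t : ℝ => u + t • d) d t := by
      simpa using ((hasDerivAt_id t).smul_const d).const_add u
    have := ((hf (u + t • d)).hasFDerivAt.comp_hasDerivAt t hline)
    simpa [InnerProductSpace.toDual_apply_apply, Function.comp_def] using this
  set h : ℝ → ℝ := fun t => f u + t * ⟪f' u, d⟫ + L / 2 * t ^ 2 * ‖d‖ ^ 2 - f (u + t • d)
    with hh
  have hderiv : ∀ t : ℝ,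
      HasDerivAt h (⟪f' u, d⟫ + L / 2 * (2 * t) * ‖d‖ ^ 2 - ⟪f' (u + t • d), d⟫) t := by
    intro t
    have ha : HasDerivAt (fun t : ℝ => t * ⟪f' u, d⟫) ⟪f' u, d⟫ t := by
      simpa using (hasDerivAt_id t).mul_const ⟪f' u, d⟫
    have hb : HasDerivAt (fun t : ℝ => L / 2 * t ^ 2 * ‖d‖ ^ 2)
        (L / 2 * (2 * t) * ‖d‖ ^ 2) t := by
      have := ((hasDerivAt_pow 2 t).const_mul (L / 2)).mul_const (‖d‖ ^ 2)
      simpa [mul_comm, mul_assoc, mul_left_comm] using this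
    exact ((ha.const_add (f u)).add hb).sub (hg t)
  have hmono : MonotoneOn h (Set.Icc (0:ℝ) 1) := by
    apply monotoneOn_of_deriv_nonneg (convex_Icc 0 1)
    · have : Differentiable ℝ h := fun t => (hderiv t).differentiableAt
      exact this.continuous.continuousOn
    · intro t ht
      exact ((hderiv t).differentiableAt).differentiableWithinAt
    · intro t ht
      rw [interior_Icc] at ht
      rw [(hderiv t).deriv]
      have key : ⟪f' (u + t • d), d⟫ - ⟪f' u, d⟫ ≤ L * t * ‖d‖ ^ 2 := by
        rw [← inner_sub_left]
        calc ⟪f' (u + t • d) - f' u, d⟫ ≤ ‖f' (u + t • d) - f' u‖ * ‖d‖ :=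
              real_inner_le_norm _ _
          _ ≤ (L * ‖(u + t • d) - u‖) * ‖d‖ := by
              have := hlip (u + t • d) u
              nlinarith [norm_nonneg d]
          _ = L * t * ‖d‖ ^ 2 := by
              rw [add_sub_cancel_left, norm_smul]
              simp only [Real.norm_eq_abs, abs_of_pos ht.1]
              try ring
      nlinarith
  have h01 : h 0 ≤ h 1 := hmono (by simp) (by simp) zero_le_one
  have h0 : h 0 = 0 := by simp [hh]
  have h1 : h 1 = f u + ⟪f' u, d⟫ + L / 2 * ‖d‖ ^ 2 - f v := by
    simp [hh, hd]
  rw [h0, h1] at h01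
  linarith

/-- Lemma 2.3(iii): if each fᵢ is μ_{f_i}-strongly convex and G is convex,
then ½‖z - x*‖²_{μ_F} ≤ φ_Γ(x) - min Φ for z ∈ T(x) and x* the (unique) minimizer of Φ. -/
theorem fbe_strongly_convex_lower_bound
    (f : ∀ i, E i → ℝ) (f' : ∀ i, E i → E i) (L γ : Fin N → ℝ)
    (G : PiLp 2 E → EReal)
    (hf : ∀ i (u : E i), HasGradientAt (f i) (f' i u) u)
    (hL : ∀ i, 0 ≤ L i)
    (hlip : ∀ i (u v : E i), ‖f' i u - f' i v‖ ≤ L i * ‖u - v‖)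
    (hγ : ∀ i, 0 < γ i) (hγL : ∀ i, γ i * L i < (N : ℝ))
    (hGlsc : LowerSemicontinuous G)
    (hGproper : ∃ w, G w ≠ ⊤) (hGbot : ∀ w, G w ≠ ⊥)
    (hargmin : ∃ xs : PiLp 2 E, ∀ w, Phi f G xs ≤ Phi f G w)
    (φ : PiLp 2 E → ℝ)
    (hφ : ∀ x, ((φ x : ℝ) : EReal) = ⨅ w, Mdl f f' γ G w x)
    (μ : Fin N → ℝ) (hμ : ∀ i, 0 < μ i)
    (hsc : ∀ i, StrongConvexOn Set.univ (μ i) (f i))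
    (hGconv : ERealConvex G) :
    ∀ x : PiLp 2 E, ∀ z ∈ Tmap f f' γ G x,
      ∀ xs : PiLp 2 E, (∀ w, Phi f G xs ≤ Phi f G w) →
        Phi f G xs + ((2⁻¹ * ∑ i, (μ i / (N : ℝ)) * ‖z i - xs i‖ ^ 2 : ℝ) : EReal)
          ≤ ((φ x : ℝ) : EReal) := by
  intro x z hz xs hxs
  classical
  -- the real-valued part of the model at (z,x)
  set A : ℝ := Fsum f x + (N : ℝ)⁻¹ * ∑ i, ⟪f' i (x i), z i - x i⟫
      + 2⁻¹ * ∑ i, (γ i)⁻¹ * ‖z i - x i‖ ^ 2 with hA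
  have hφx : ((φ x : ℝ) : EReal) = ((A : ℝ) : EReal) + G z := by
    rw [hφ x]
    exact le_antisymm (iInf_le _ z) (le_iInf hz)
  -- descent lemma summed: Fsum f z ≤ A
  have hdesc : Fsum f z ≤ A := by
    rw [hA]
    unfold Fsum
    have hterm : ∀ i : Fin N,
        (N : ℝ)⁻¹ * f i (z i) ≤ (N : ℝ)⁻¹ * (f i (x i) + ⟪f' i (x i), z i - x i⟫)
          + 2⁻¹ * ((γ i)⁻¹ * ‖z i - x i‖ ^ 2) := by
      intro i
      have hN : (0:ℝ) < N := by exact_mod_cast i.pos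
      have hγi := hγ i
      have h1 := descent_lemma' (f i) (f' i) (L i) (hf i) (hlip i) (x i) (z i)
      have h2 := mul_le_mul_of_nonneg_left h1 (by positivity : (0:ℝ) ≤ (N : ℝ)⁻¹)
      have e1 : (N : ℝ) * (N : ℝ)⁻¹ = 1 := mul_inv_cancel₀ hN.ne'
      have e2 : γ i * (γ i)⁻¹ = 1 := mul_inv_cancel₀ hγi.ne'
      have h3 : (N : ℝ)⁻¹ * L i ≤ (γ i)⁻¹ := by
        nlinarith [hγL i, hL i, sq_nonneg ((N:ℝ)⁻¹ - (γ i)⁻¹), inv_pos.mpr hN,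
          inv_pos.mpr hγi, mul_pos (inv_pos.mpr hN) (inv_pos.mpr hγi)]
      nlinarith [sq_nonneg ‖z i - x i‖,
        mul_le_mul_of_nonneg_right h3 (sq_nonneg ‖z i - x i‖)]
    calc (N : ℝ)⁻¹ * ∑ i, f i (z i) = ∑ i, (N : ℝ)⁻¹ * f i (z i) := Finset.mul_sum ..
      _ ≤ ∑ i, ((N : ℝ)⁻¹ * (f i (x i) + ⟪f' i (x i), z i - x i⟫)
            + 2⁻¹ * ((γ i)⁻¹ * ‖z i - x i‖ ^ 2)) :=
          Finset.sum_le_sum fun i _ => hterm i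
      _ = (N : ℝ)⁻¹ * ∑ i, f i (x i) + (N : ℝ)⁻¹ * ∑ i, ⟪f' i (x i), z i - x i⟫
            + 2⁻¹ * ∑ i, (γ i)⁻¹ * ‖z i - x i‖ ^ 2 := by
          rw [Finset.sum_add_distrib, ← Finset.mul_sum]
          simp only [mul_add, Finset.sum_add_distrib, ← Finset.mul_sum]
          try ring
  -- quadratic gap
  set c : ℝ := 2⁻¹ * ∑ i, (μ i / (N : ℝ)) * ‖z i - xs i‖ ^ 2 with hc
  have hc0 : 0 ≤ c := by
    rw [hc]
    have : ∀ i ∈ Finset.univ, (0:ℝ) ≤ (μ i / (N : ℝ)) * ‖z i - xs i‖ ^ 2 := fun i _ => by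
      have := (hμ i).le
      positivity
    nlinarith [Finset.sum_nonneg this]
  -- G xs is finite
  have hGxs_ne_bot := hGbot xs
  have hGxs_ne_top : G xs ≠ ⊤ := by
    intro htop
    obtain ⟨w, hw⟩ := hGproper
    have hle := hxs w
    have hxst : Phi f G xs = ⊤ := by
      unfold Phi; rw [htop]; exact EReal.coe_add_top _
    rw [hxst, top_le_iff] at hle
    obtain ⟨gw, hgw⟩ : ∃ gw : ℝ, G w = (gw : EReal) :=
      ⟨(G w).toReal, (EReal.coe_toReal hw (hGbot w)).symm⟩
    unfold Phi at hle
    rw [hgw, ← EReal.coe_add] at hle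
    exact EReal.coe_ne_top _ hle
  obtain ⟨gxs, hgxs⟩ : ∃ g : ℝ, G xs = (g : EReal) :=
    ⟨(G xs).toReal, (EReal.coe_toReal hGxs_ne_top hGxs_ne_bot).symm⟩
  -- split on whether G z is ⊤
  by_cases hGz : G z = ⊤
  · rw [hφx, hGz, EReal.coe_add_top]
    exact le_top
  obtain ⟨gz, hgz⟩ : ∃ g : ℝ, G z = (g : EReal) :=
    ⟨(G z).toReal, (EReal.coe_toReal hGz (hGbot z)).symm⟩
  -- real version of the strong-convexity bound: Fsum f xs + gxs + c ≤ Fsum f z + gz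
  set p : ℝ := Fsum f xs + gxs with hp
  set q : ℝ := Fsum f z + gz with hq
  have hsc_real : ∀ t : ℝ, 0 < t → t < 1 → p + (1 - t) * c ≤ q := by
    intro t ht0 ht1
    set wt : PiLp 2 E := (1 - t) • xs + t • z with hwt
    have hwt_app : ∀ i, wt i = (1 - t) • xs i + t • z i := fun i => by
      rw [hwt]; simp [PiLp.add_apply, PiLp.smul_apply]
    -- strong convexity of Fsum
    have hFwt : Fsum f wt ≤ (1 - t) * Fsum f xs + t * Fsum f z - (1 - t) * t * c := by
      unfold Fsum
      have hterm : ∀ i : Fin N,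
          (N : ℝ)⁻¹ * f i (wt i) ≤ (N : ℝ)⁻¹ * ((1 - t) * f i (xs i) + t * f i (z i))
            - (1 - t) * t * (2⁻¹ * ((μ i / (N : ℝ)) * ‖z i - xs i‖ ^ 2)) := by
        intro i
        have hN : (0:ℝ) < N := by exact_mod_cast i.pos
        have hsci := (hsc i).2 (Set.mem_univ (xs i)) (Set.mem_univ (z i))
          (by linarith : (0:ℝ) ≤ 1 - t) ht0.le (by ring)
        rw [hwt_app i]
        have h2 := mul_le_mul_of_nonneg_left hsci (by positivity : (0:ℝ) ≤ (N : ℝ)⁻¹)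
        have hnorm : ‖xs i - z i‖ = ‖z i - xs i‖ := norm_sub_rev _ _
        have e1 : (N : ℝ) * (N : ℝ)⁻¹ = 1 := mul_inv_cancel₀ hN.ne'
        have ediv : μ i / (N : ℝ) = μ i * (N : ℝ)⁻¹ := div_eq_mul_inv _ _
        simp only [smul_eq_mul, hnorm, ediv] at h2 ⊢
        nlinarith [h2]
      calc (N : ℝ)⁻¹ * ∑ i, f i (wt i) = ∑ i, (N : ℝ)⁻¹ * f i (wt i) := Finset.mul_sum ..
        _ ≤ ∑ i, ((N : ℝ)⁻¹ * ((1 - t) * f i (xs i) + t * f i (z i))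
              - (1 - t) * t * (2⁻¹ * ((μ i / (N : ℝ)) * ‖z i - xs i‖ ^ 2))) :=
            Finset.sum_le_sum fun i _ => hterm i
        _ = (1 - t) * ((N : ℝ)⁻¹ * ∑ i, f i (xs i)) + t * ((N : ℝ)⁻¹ * ∑ i, f i (z i))
              - (1 - t) * t * c := by
            rw [hc, Finset.sum_sub_distrib]
            simp only [mul_add, Finset.sum_add_distrib, ← Finset.mul_sum]
            try ring
    -- convexity of G
    have hGwt : G wt ≤ (((1 - t) * gxs + t * gz : ℝ) : EReal) := by
      have := hGconv xs z (1 - t) t (by linarith) ht0.le (by ring)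
      rw [hgxs, hgz] at this
      rw [← hwt] at this
      calc G wt ≤ ((1 - t : ℝ) : EReal) * ((gxs : ℝ) : EReal)
            + ((t : ℝ) : EReal) * ((gz : ℝ) : EReal) := this
        _ = (((1 - t) * gxs + t * gz : ℝ) : EReal) := by
            rw [← EReal.coe_mul, ← EReal.coe_mul, ← EReal.coe_add]
    -- combine via minimality of xs
    have hkey : Phi f G xs ≤ ((Fsum f wt + ((1 - t) * gxs + t * gz) : ℝ) : EReal) := by
      calc Phi f G xs ≤ Phi f G wt := hxs wt
        _ = ((Fsum f wt : ℝ) : EReal) + G wt := rfl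
        _ ≤ ((Fsum f wt : ℝ) : EReal) + (((1 - t) * gxs + t * gz : ℝ) : EReal) :=
            add_le_add_right hGwt _
        _ = ((Fsum f wt + ((1 - t) * gxs + t * gz) : ℝ) : EReal) := by
            rw [← EReal.coe_add]
    have hPhixs : Phi f G xs = ((p : ℝ) : EReal) := by
      unfold Phi; rw [hgxs, ← EReal.coe_add, hp]
    rw [hPhixs, EReal.coe_le_coe_iff] at hkey
    -- now pure real arithmetic
    have h6 : t * (p + (1 - t) * c) ≤ t * q := by nlinarith [hkey, hFwt]
    exact le_of_mul_le_mul_left h6 ht0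
  have hpq : p + c ≤ q := by
    apply le_of_forall_pos_le_add
    intro ε hε
    have hc1 : (0:ℝ) < c + 1 := by linarith
    set t : ℝ := min (1/2) (ε / (c + 1)) with htdef
    have ht0 : 0 < t := lt_min (by norm_num) (by positivity)
    have ht1 : t < 1 := lt_of_le_of_lt (min_le_left _ _) (by norm_num)
    have htc : t * c ≤ ε := by
      have h7 : t ≤ ε / (c + 1) := min_le_right _ _
      have h8 : t * (c + 1) ≤ ε := by
        rw [← le_div_iff₀ hc1] at *
        exact h7
      nlinarith
    have := hsc_real t ht0 ht1
    nlinarith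
  -- conclude in EReal
  rw [hφx, hgz]
  have hPhixs : Phi f G xs = ((p : ℝ) : EReal) := by
    unfold Phi; rw [hgxs, ← EReal.coe_add, hp]
  rw [hPhixs, ← EReal.coe_add, ← EReal.coe_add, EReal.coe_le_coe_iff]
  linarith
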